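/- arXiv:2202.05326 — 2 statements merged into one kernel-verified Lean document; each statement's English description precedes it below -/
import Mathlib

section
/- Let β ∈ (0,1), r, λ, Λ ∈ ℝ with r ≠ λ(1−β), set θ := (r − λ(1−β))/β, let T > 0 and k₀ > 0, and suppose that (k₀ − Λ/θ)·exp(−θ(T−t)) + Λ/θ > 0 for all t in an open interval I ⊆ ℝ containing [0,T]. Define ψ₀(t) := exp(−rt/(1−β))·[(k₀ − Λ/θ)·exp(−θ(T−t)) + Λ/θ]^{β/(1−β)}. Then: (i) for every t ∈ I, −ψ₀′(t) = λ·ψ₀(t) + (β/(1−β))·Λ·exp(−rt/β)·ψ₀(t)^{(2β−1)/β}; and (ii) ψ₀(T)^{1−β} = exp(−rT)·k₀^{β}. -/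
/-- **The function ψ₀ solves the reduced HJB ODE with the terminal condition.**
Let `β ∈ (0,1)`, `r, λ, Λ ∈ ℝ` with `r ≠ λ(1−β)`, set `θ := (r − λ(1−β))/β`, let `T > 0`,
`k₀ > 0`, and suppose `(k₀ − Λ/θ)·exp(−θ(T−t)) + Λ/θ > 0` on an open interval `I = Ioo a b`
containing `[0,T]`.  Define
`ψ₀(t) := exp(−rt/(1−β))·[(k₀ − Λ/θ)·exp(−θ(T−t)) + Λ/θ]^{β/(1−β)}`.  Then
(i) for every `t ∈ I`,
`−ψ₀′(t) = λ·ψ₀(t) + (β/(1−β))·Λ·exp(−rt/β)·ψ₀(t)^{(2β−1)/β}`; and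
(ii) `ψ₀(T)^{1−β} = exp(−rT)·k₀^β`. -/
theorem stmt_2 (β r lam Λ T k₀ a b : ℝ) (hβ : β ∈ Set.Ioo (0 : ℝ) 1)
    (hrl : r ≠ lam * (1 - β)) (hT : 0 < T) (hk₀ : 0 < k₀)
    (hI : Set.Icc (0 : ℝ) T ⊆ Set.Ioo a b)
    (hpos : ∀ t ∈ Set.Ioo a b,
      (k₀ - Λ / ((r - lam * (1 - β)) / β)) *
          Real.exp (-((r - lam * (1 - β)) / β) * (T - t))
        + Λ / ((r - lam * (1 - β)) / β) > 0) :
    (∀ t ∈ Set.Ioo a b,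
      HasDerivAt
        (fun s : ℝ => Real.exp (-r * s / (1 - β)) *
          ((k₀ - Λ / ((r - lam * (1 - β)) / β)) *
              Real.exp (-((r - lam * (1 - β)) / β) * (T - s))
            + Λ / ((r - lam * (1 - β)) / β)) ^ (β / (1 - β)))
        (-(lam * (Real.exp (-r * t / (1 - β)) *
            ((k₀ - Λ / ((r - lam * (1 - β)) / β)) *
                Real.exp (-((r - lam * (1 - β)) / β) * (T - t))
              + Λ / ((r - lam * (1 - β)) / β)) ^ (β / (1 - β)))
          + β / (1 - β) * Λ * Real.exp (-r * t / β) *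
            (Real.exp (-r * t / (1 - β)) *
              ((k₀ - Λ / ((r - lam * (1 - β)) / β)) *
                  Real.exp (-((r - lam * (1 - β)) / β) * (T - t))
                + Λ / ((r - lam * (1 - β)) / β)) ^ (β / (1 - β)))
              ^ ((2 * β - 1) / β))) t) ∧
    (Real.exp (-r * T / (1 - β)) *
        ((k₀ - Λ / ((r - lam * (1 - β)) / β)) *
            Real.exp (-((r - lam * (1 - β)) / β) * (T - T))
          + Λ / ((r - lam * (1 - β)) / β)) ^ (β / (1 - β))) ^ (1 - β)
      = Real.exp (-r * T) * k₀ ^ β := by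
  obtain ⟨hβ0, hβ1⟩ := hβ
  have hb1 : (0:ℝ) < 1 - β := by linarith
  have hβne : β ≠ 0 := ne_of_gt hβ0
  have hb1ne : (1:ℝ) - β ≠ 0 := ne_of_gt hb1
  set θ : ℝ := (r - lam * (1 - β)) / β with hθdef
  have hθ : θ ≠ 0 := div_ne_zero (sub_ne_zero.mpr hrl) hβne
  have hθβ : θ * β = r - lam * (1 - β) := by
    rw [hθdef]; field_simp
  constructor
  · intro t ht
    have hG : 0 < (k₀ - Λ/θ) * Real.exp (-θ*(T-t)) + Λ/θ := hpos t ht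
    set G : ℝ := (k₀ - Λ/θ) * Real.exp (-θ*(T-t)) + Λ/θ with hGdef
    set E : ℝ := Real.exp (-r * t / (1 - β)) with hEdef
    have hE : 0 < E := Real.exp_pos _
    -- derivative of inner g
    have hgd : HasDerivAt (fun s : ℝ => (k₀ - Λ/θ) * Real.exp (-θ*(T-s)) + Λ/θ)
        ((k₀ - Λ/θ) * (Real.exp (-θ*(T-t)) * θ)) t := by
      have h1 : HasDerivAt (fun s : ℝ => -θ*(T-s)) θ t := by
        simpa using ((hasDerivAt_id t).const_sub T).const_mul (-θ)
      exact ((h1.exp).const_mul (k₀ - Λ/θ)).add_const _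
    have hrp : HasDerivAt (fun s : ℝ => ((k₀ - Λ/θ) * Real.exp (-θ*(T-s)) + Λ/θ) ^ (β/(1-β)))
        (((k₀ - Λ/θ) * (Real.exp (-θ*(T-t)) * θ)) * (β/(1-β)) * G ^ (β/(1-β) - 1)) t :=
      hgd.rpow_const (Or.inl (ne_of_gt hG))
    have hed : HasDerivAt (fun s : ℝ => Real.exp (-r * s / (1 - β)))
        (Real.exp (-r * t / (1 - β)) * (-r / (1 - β))) t := by
      have h2 : HasDerivAt (fun s : ℝ => -r * s / (1 - β)) (-r / (1 - β)) t := by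
        simpa using ((hasDerivAt_id t).const_mul (-r)).div_const (1 - β)
      exact h2.exp
    have hD := hed.mul hrp
    convert hD using 1
    · rfl
    · rfl
    · rfl
    -- now the value equality
    have hpow1 : G ^ (β/(1-β) - 1) * G = G ^ (β/(1-β)) := by
      rw [← Real.rpow_add_one (ne_of_gt hG)]; ring_nf
    have hEG : (E * G ^ (β/(1-β))) ^ ((2*β-1)/β)
        = Real.exp (-r * t / (1 - β) * ((2*β-1)/β)) * G ^ (β/(1-β) * ((2*β-1)/β)) := by
      rw [Real.mul_rpow hE.le (Real.rpow_nonneg hG.le _)]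
      rw [← Real.rpow_mul hG.le]
      rw [hEdef]
      rw [← Real.exp_mul]
    have hexp : Real.exp (-r*t/β) * Real.exp (-r*t/(1-β)*((2*β-1)/β)) = E := by
      rw [hEdef, ← Real.exp_add]
      congr 1
      field_simp
      ring
    have hexpo : β/(1-β) * ((2*β-1)/β) = β/(1-β) - 1 := by
      field_simp
      ring
    have hg' : (k₀ - Λ/θ) * (Real.exp (-θ*(T-t)) * θ) = θ * G - Λ := by
      rw [hGdef]
      field_simp
      ring
    rw [hEG, hexpo, hg', ← hpow1, ← hEdef]
    set X : ℝ := G ^ (β/(1-β) - 1) with hXdef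
    clear_value X
    clear_value G
    clear_value E
    clear_value θ
    linear_combination (-(E*X*G)/(1-β)) * hθβ + (-(β/(1-β)*Λ*X)) * hexp + (lam*E*X*G) * (mul_inv_cancel₀ hb1ne)
  · have h0 : -θ * (T - T) = 0 := by ring
    rw [h0, Real.exp_zero]
    have hk : (k₀ - Λ/θ) * 1 + Λ/θ = k₀ := by ring
    rw [hk, Real.mul_rpow (Real.exp_pos _).le (Real.rpow_nonneg hk₀.le _),
      ← Real.exp_mul, ← Real.rpow_mul hk₀.le]
    congr 1
    · field_simp
    · field_simp
end

section
/- Let N ≥ 1, γ > 0, b ∈ ℝᴺ, and let ν be a probability measure on ℝᴺ whose identity map is Bochner integrable with mean m₀ := ∫ x dν. Consider the set S of real numbers of the form ∫ (⟨b, y⟩ − ‖x − y‖²/(2γ)) dπ(x,y), where π ranges over all probability measures on ℝᴺ × ℝᴺ whose first marginal is ν and for which the maps (x,y) ↦ x, (x,y) ↦ y, and (x,y) ↦ ‖x−y‖² are integrable. Then ⟨b, m₀⟩ + (γ/2)·‖b‖² is the greatest element of S, and it is attained by the pushforward π* of ν under the map x ↦ (x, x + γ·b). -/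
open MeasureTheory
open scoped RealInnerProductSpace

lemma aux_pt {N : ℕ} (γ : ℝ) (hγ : 0 < γ) (b x y : EuclideanSpace ℝ (Fin N)) :
    ⟪b, y⟫ - ‖x - y‖ ^ 2 / (2 * γ) ≤ ⟪b, x⟫ + γ / 2 * ‖b‖ ^ 2 := by
  have h1 : ⟪b, y⟫ - ⟪b, x⟫ = ⟪b, y - x⟫ := by rw [inner_sub_right]
  have h2 : ⟪b, y - x⟫ ≤ ‖b‖ * ‖y - x‖ := real_inner_le_norm b (y - x)
  have h3 : ‖x - y‖ = ‖y - x‖ := norm_sub_rev x y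
  have hγ' : (0:ℝ) < 2 * γ := by linarith
  have h5 : ‖y - x‖ ^ 2 / (2 * γ) * (2 * γ) = ‖y - x‖ ^ 2 :=
    div_mul_cancel₀ _ (ne_of_gt hγ')
  rw [h3]
  nlinarith [sq_nonneg (γ * ‖b‖ - ‖y - x‖), h1, h2, h5, hγ]

/-- **The translated measure maximizes the Wasserstein-penalized functional (coupling form).**
Let `N ≥ 1`, `γ > 0`, `b ∈ ℝᴺ`, and `ν` a probability measure on `ℝᴺ` with Bochner-integrable
identity and mean `m₀ = ∫ x dν`.  Among all couplings `π` with first marginal `ν` (and the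
required integrability), the value `∫ (⟨b,y⟩ − ‖x−y‖²/(2γ)) dπ` has greatest element
`⟨b,m₀⟩ + (γ/2)‖b‖²`, attained by the pushforward of `ν` under `x ↦ (x, x + γ·b)`. -/
theorem stmt_13 (N : ℕ) (hN : 1 ≤ N) (γ : ℝ) (hγ : 0 < γ)
    (b : EuclideanSpace ℝ (Fin N))
    (ν : Measure (EuclideanSpace ℝ (Fin N))) [IsProbabilityMeasure ν]
    (hν : Integrable id ν) :
    IsGreatest
      { r : ℝ |
        ∃ π : Measure (EuclideanSpace ℝ (Fin N) × EuclideanSpace ℝ (Fin N)),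
          IsProbabilityMeasure π ∧ π.map Prod.fst = ν ∧
          Integrable (fun p => p.1) π ∧ Integrable (fun p => p.2) π ∧
          Integrable (fun p => ‖p.1 - p.2‖ ^ 2) π ∧
          r = ∫ p, (⟪b, p.2⟫ - ‖p.1 - p.2‖ ^ 2 / (2 * γ)) ∂π }
      (⟪b, ∫ x, x ∂ν⟫ + γ / 2 * ‖b‖ ^ 2) ∧
    ∫ p, (⟪b, p.2⟫ - ‖p.1 - p.2‖ ^ 2 / (2 * γ))
        ∂(ν.map (fun x => (x, x + γ • b)))
      = ⟪b, ∫ x, x ∂ν⟫ + γ / 2 * ‖b‖ ^ 2 := by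
  have hν' : Integrable (fun x : EuclideanSpace ℝ (Fin N) => x) ν := hν
  set T : EuclideanSpace ℝ (Fin N) → EuclideanSpace ℝ (Fin N) × EuclideanSpace ℝ (Fin N) :=
    fun x => (x, x + γ • b) with hT
  have hTm : Measurable T := measurable_id.prodMk (measurable_id.add_const _)
  have hfc : Continuous (fun p : EuclideanSpace ℝ (Fin N) × EuclideanSpace ℝ (Fin N) =>
      ⟪b, p.2⟫ - ‖p.1 - p.2‖ ^ 2 / (2 * γ)) :=
    (continuous_const.inner continuous_snd).sub
      (((continuous_fst.sub continuous_snd).norm.pow 2).div_const _)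
  have hnormsq : ∀ x : EuclideanSpace ℝ (Fin N),
      ‖x - (x + γ • b)‖ ^ 2 = γ ^ 2 * ‖b‖ ^ 2 := by
    intro x
    have hx : x - (x + γ • b) = -(γ • b) := by abel
    rw [hx, norm_neg, norm_smul, Real.norm_eq_abs, abs_of_pos hγ, mul_pow]
  have hcomp : ∀ x : EuclideanSpace ℝ (Fin N),
      ⟪b, x + γ • b⟫ - ‖x - (x + γ • b)‖ ^ 2 / (2 * γ) = ⟪b, x⟫ + γ / 2 * ‖b‖ ^ 2 := by
    intro x
    have h1 : ⟪b, x + γ • b⟫ = ⟪b, x⟫ + γ * ‖b‖ ^ 2 := by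
      rw [inner_add_right, real_inner_smul_right, real_inner_self_eq_norm_sq]
    rw [h1, hnormsq x]
    field_simp
    ring
  have hval : ∫ p, (⟪b, p.2⟫ - ‖p.1 - p.2‖ ^ 2 / (2 * γ)) ∂(ν.map T)
      = ⟪b, ∫ x, x ∂ν⟫ + γ / 2 * ‖b‖ ^ 2 := by
    rw [integral_map hTm.aemeasurable hfc.aestronglyMeasurable]
    simp only [hT]
    simp only [hcomp]
    rw [integral_add (hν'.const_inner b) (integrable_const _), integral_const,
      integral_inner hν']
    simp
  refine ⟨⟨?_, ?_⟩, hval⟩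
  · refine ⟨ν.map T, Measure.isProbabilityMeasure_map hTm.aemeasurable, ?_, ?_, ?_, ?_, hval.symm⟩
    · rw [Measure.map_map measurable_fst hTm]
      have h : Prod.fst ∘ T = id := rfl
      rw [h, Measure.map_id]
    · rw [integrable_map_measure continuous_fst.aestronglyMeasurable hTm.aemeasurable]
      exact hν'
    · rw [integrable_map_measure continuous_snd.aestronglyMeasurable hTm.aemeasurable]
      exact hν'.add (integrable_const _)
    · rw [integrable_map_measure
        (g := fun p : EuclideanSpace ℝ (Fin N) × EuclideanSpace ℝ (Fin N) => ‖p.1 - p.2‖ ^ 2)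
        ((continuous_fst.sub continuous_snd).norm.pow 2).aestronglyMeasurable hTm.aemeasurable]
      have h : ((fun p : EuclideanSpace ℝ (Fin N) × EuclideanSpace ℝ (Fin N) =>
          ‖p.1 - p.2‖ ^ 2) ∘ T) = fun _ => γ ^ 2 * ‖b‖ ^ 2 := by
        funext x
        simp only [Function.comp, hT]
        exact hnormsq x
      rw [h]
      exact integrable_const _
  · rintro r ⟨π, hπprob, hmarg, h1, h2, h3, rfl⟩
    have hfint : Integrable (fun p : EuclideanSpace ℝ (Fin N) × EuclideanSpace ℝ (Fin N) =>
        ⟪b, p.2⟫ - ‖p.1 - p.2‖ ^ 2 / (2 * γ)) π :=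
      (h2.const_inner b).sub (h3.div_const _)
    have hgint : Integrable (fun p : EuclideanSpace ℝ (Fin N) × EuclideanSpace ℝ (Fin N) =>
        ⟪b, p.1⟫ + γ / 2 * ‖b‖ ^ 2) π :=
      (h1.const_inner b).add (integrable_const _)
    have hmono := integral_mono hfint hgint (fun p => aux_pt γ hγ b p.1 p.2)
    refine hmono.trans_eq ?_
    have hfst : ∫ p : EuclideanSpace ℝ (Fin N) × EuclideanSpace ℝ (Fin N), ⟪b, p.1⟫ ∂π
        = ∫ x, ⟪b, x⟫ ∂ν := by
      rw [← hmarg, integral_map measurable_fst.aemeasurable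
        (continuous_const.inner continuous_id).aestronglyMeasurable]
    rw [integral_add (h1.const_inner b) (integrable_const _), integral_const, hfst,
      integral_inner hν']
    simp
end
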